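/- Let C, D, D' be chambers of a locally finite hyperplane arrangement and F' ⪯ F faces with F' a face of both D and D'. Suppose D = C.F and D' = C.F' (i.e. no hyperplane of supp(F) separates C and D, and none of supp(F') separates C and D'). Let E = D^F and E' = D'^{F'} be the opposite chambers. Then s(C,E') ⊆ s(C,E), i.e. E' ≤_C E in the tope poset based at C. -/

import Mathlib

open Metric Set MeasureTheory

noncomputable section

/-- A locally finite arrangement of affine hyperplanes in ℝⁿ, given by affine
equations `⟪a i, x⟫ = b i` with `a i ≠ 0`, indexed injectively by `ι`. -/
structure Arrangement (n : ℕ) (ι : Type) where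
  a : ι → EuclideanSpace ℝ (Fin n)
  b : ι → ℝ
  ha : ∀ i, a i ≠ 0
  inj : Function.Injective fun i => {x : EuclideanSpace ℝ (Fin n) | (inner ℝ (a i) x : ℝ) = b i}
  locFin : ∀ x : EuclideanSpace ℝ (Fin n), ∃ ε > 0,
    {i : ι | ∃ y ∈ Metric.ball x ε, (inner ℝ (a i) y : ℝ) = b i}.Finite

namespace Arrangement

variable {n : ℕ} {ι : Type} (A : Arrangement n ι)

/-- The defining affine functional of the `i`-th hyperplane. -/
def val (i : ι) (x : EuclideanSpace ℝ (Fin n)) : ℝ := (inner ℝ (A.a i) x : ℝ) - A.b i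

/-- The `i`-th hyperplane. -/
def hyperplane (i : ι) : Set (EuclideanSpace ℝ (Fin n)) := {x | A.val i x = 0}

/-- The sign vector of a point. -/
def signAt (x : EuclideanSpace ℝ (Fin n)) : ι → SignType := fun i => SignType.sign (A.val i x)

/-- The (relatively open) stratum with sign vector `σ`. -/
def openCell (σ : ι → SignType) : Set (EuclideanSpace ℝ (Fin n)) :=
  {x | ∀ i, SignType.sign (A.val i x) = σ i}

/-- The (closed) faces of the arrangement: closures of the strata. -/
def IsFace (F : Set (EuclideanSpace ℝ (Fin n))) : Prop :=
  ∃ x : EuclideanSpace ℝ (Fin n), F = closure (A.openCell (A.signAt x))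

/-- Chambers: closed faces of codimension 0. -/
def IsChamber (C : Set (EuclideanSpace ℝ (Fin n))) : Prop :=
  ∃ x : EuclideanSpace ℝ (Fin n), (∀ i, A.val i x ≠ 0) ∧
    C = closure (A.openCell (A.signAt x))

/-- The support of a subset: the hyperplanes containing it. -/
def supp (U : Set (EuclideanSpace ℝ (Fin n))) : Set ι := {i | U ⊆ A.hyperplane i}

/-- The set of hyperplanes separating two chambers. -/
def sep (C C' : Set (EuclideanSpace ℝ (Fin n))) : Set ι :=
  {i | ∀ x ∈ interior C, ∀ y ∈ interior C', A.val i x * A.val i y < 0}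

/-- `F` is a face of the chamber (or face) `C`. -/
def IsFaceOf (F C : Set (EuclideanSpace ℝ (Fin n))) : Prop := A.IsFace F ∧ F ⊆ C

/-- `A.IsCF C F D` means `D = C.F`: `D` is the unique chamber containing `F` and not
separated from `C` by any hyperplane of `supp F`. -/
def IsCF (C F D : Set (EuclideanSpace ℝ (Fin n))) : Prop :=
  A.IsChamber D ∧ F ⊆ D ∧ A.sep C D ∩ A.supp F = ∅

/-- `A.IsOpp D F E` means `E = D^F`: `E` is the chamber opposite to `D` with respect to
its face `F`, i.e. the hyperplanes separating `D` and `E` are exactly those containing `F`. -/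
def IsOpp (D F E : Set (EuclideanSpace ℝ (Fin n))) : Prop :=
  A.IsChamber E ∧ F ⊆ E ∧ A.sep D E = A.supp F

/-- Flats: nonempty intersections of subfamilies of hyperplanes (including ℝⁿ itself). -/
def IsFlat (X : Set (EuclideanSpace ℝ (Fin n))) : Prop :=
  X.Nonempty ∧ ∃ s : Set ι, X = ⋂ i ∈ s, A.hyperplane i

/-- A cell `⟨C, F⟩` of the Salvetti complex: a chamber `C` together with a face `F` of `C`. -/
structure Cell {n : ℕ} {ι : Type} (𝒜 : Arrangement n ι) where
  C : Set (EuclideanSpace ℝ (Fin n))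
  F : Set (EuclideanSpace ℝ (Fin n))
  isChamber : 𝒜.IsChamber C
  isFace : 𝒜.IsFace F
  faceLe : F ⊆ C

/-- The Salvetti order: `⟨C,F⟩ ≤ ⟨D,G⟩` iff `F ⪯ G` (i.e. `F ⊇ G`) and `D.F = C`. -/
def cellLE (c d : A.Cell) : Prop := d.F ⊆ c.F ∧ A.IsCF d.C c.F c.C

/-- The subcomplex `S(C)`: cells `⟨D,F⟩` with `D = C.F`. -/
def inS (C : Set (EuclideanSpace ℝ (Fin n))) (c : A.Cell) : Prop := A.IsCF C c.F c.C

/-- A strict total order on the chambers. -/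
def IsChamberOrder (lt : Set (EuclideanSpace ℝ (Fin n)) → Set (EuclideanSpace ℝ (Fin n)) → Prop) :
    Prop :=
  (∀ C C', A.IsChamber C → A.IsChamber C' → C ≠ C' → lt C C' ∨ lt C' C) ∧
  (∀ C, ¬ lt C C) ∧
  (∀ C C' C'', lt C C' → lt C' C'' → lt C C'')

/-- The upper ideal `J(C)` of the poset of flats determined by a total order on chambers. -/
def J (lt : Set (EuclideanSpace ℝ (Fin n)) → Set (EuclideanSpace ℝ (Fin n)) → Prop)
    (C : Set (EuclideanSpace ℝ (Fin n))) : Set (Set (EuclideanSpace ℝ (Fin n))) :=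
  {X | A.IsFlat X ∧ ∀ C', A.IsChamber C' → lt C' C → (A.supp X ∩ A.sep C C').Nonempty}

/-- A valid order: for each chamber `C`, the ideal `J(C)` is the principal upper ideal
(in the poset of flats ordered by reverse inclusion) generated by `X_C = |F_C|` for some
face `F_C` of `C`. -/
def IsValidOrder
    (lt : Set (EuclideanSpace ℝ (Fin n)) → Set (EuclideanSpace ℝ (Fin n)) → Prop) : Prop :=
  A.IsChamberOrder lt ∧
  ∀ C, A.IsChamber C → ∃ F_C, A.IsFaceOf F_C C ∧
    A.J lt C = {X | A.IsFlat X ∧ X ⊆ (affineSpan ℝ F_C : Set (EuclideanSpace ℝ (Fin n)))}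

/-- Membership in `N(C)`: cells of `S(C)` not lying in any earlier `S(C')`. -/
def inN (lt : Set (EuclideanSpace ℝ (Fin n)) → Set (EuclideanSpace ℝ (Fin n)) → Prop)
    (C : Set (EuclideanSpace ℝ (Fin n))) (c : A.Cell) : Prop :=
  A.inS C c ∧ ∀ C', A.IsChamber C' → lt C' C → ¬ A.inS C' c

/-- A point `x₀` is generic with respect to `A`: (i) chambers at equal distance from `x₀`
have the same metric projection of `x₀`, lying in their intersection; (ii) distances to
strictly comparable flats are strictly comparable. -/
def IsGeneric (x₀ : EuclideanSpace ℝ (Fin n)) : Prop :=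
  (∀ C C', A.IsChamber C → A.IsChamber C' → infDist x₀ C = infDist x₀ C' →
    ∀ p ∈ C, ∀ p' ∈ C', (∀ q ∈ C, dist x₀ p ≤ dist x₀ q) →
      (∀ q ∈ C', dist x₀ p' ≤ dist x₀ q) → p = p' ∧ p ∈ C ∩ C') ∧
  (∀ L L', A.IsFlat L → A.IsFlat L' → L' ⊂ L → infDist x₀ L < infDist x₀ L')

lemma val_continuous (i : ι) : Continuous (A.val i) :=
  (continuous_const.inner continuous_id).sub continuous_const

lemma mem_openCell_self (x : EuclideanSpace ℝ (Fin n)) :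
    x ∈ A.openCell (A.signAt x) := fun _ => rfl

lemma hyperplane_isClosed (i : ι) : IsClosed (A.hyperplane i) :=
  isClosed_eq (A.val_continuous i) continuous_const

lemma closure_sign (σ : ι → SignType) (i : ι) :
    ∀ y ∈ closure (A.openCell σ), 0 ≤ (σ i : ℝ) * A.val i y := by
  apply closure_minimal
  · intro z hz
    have hs := hz i
    show (0:ℝ) ≤ (σ i : ℝ) * A.val i z
    rcases lt_trichotomy (A.val i z) 0 with h | h | h
    · rw [← hs, sign_neg h, show ((-1 : SignType) : ℝ) = -1 from rfl]; linarith
    · rw [h, mul_zero]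
    · rw [← hs, sign_pos h, show ((1 : SignType) : ℝ) = 1 from rfl]; linarith
  · exact isClosed_le continuous_const (continuous_const.mul (A.val_continuous i))

lemma zero_on_closure (σ : ι → SignType) (i : ι) (h : σ i = 0) :
    ∀ y ∈ closure (A.openCell σ), A.val i y = 0 := by
  apply closure_minimal
  · intro z hz
    have hs := hz i
    rw [h] at hs
    exact sign_eq_zero_iff.mp hs
  · exact isClosed_eq (A.val_continuous i) continuous_const

lemma sign_eq_of_mem_closure {σ : ι → SignType} {y : EuclideanSpace ℝ (Fin n)}
    (hy : y ∈ closure (A.openCell σ)) (i : ι) (hne : A.val i y ≠ 0) (hσ : σ i ≠ 0) :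
    SignType.sign (A.val i y) = σ i := by
  have h := A.closure_sign σ i y hy
  rcases hne.lt_or_gt with hv | hv
  · rw [sign_neg hv]
    rcases h' : σ i with _ | _ | _
    · exact absurd h' hσ
    · rfl
    · rw [h', show ((SignType.pos : SignType) : ℝ) = 1 from rfl] at h; nlinarith
  · rw [sign_pos hv]
    rcases h' : σ i with _ | _ | _
    · exact absurd h' hσ
    · rw [h', show ((SignType.neg : SignType) : ℝ) = -1 from rfl] at h; nlinarith
    · rfl

lemma sign_const_of_ne_zero {s : Set (EuclideanSpace ℝ (Fin n))} (hs : Convex ℝ s) (i : ι)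
    (h : ∀ y ∈ s, A.val i y ≠ 0) {x y : EuclideanSpace ℝ (Fin n)}
    (hx : x ∈ s) (hy : y ∈ s) :
    SignType.sign (A.val i x) = SignType.sign (A.val i y) := by
  have key : ∀ u v : EuclideanSpace ℝ (Fin n), u ∈ s → v ∈ s →
      A.val i u < 0 → 0 < A.val i v → False := by
    intro u v hu hv h1 h2
    have hc : Continuous fun t : ℝ => A.val i ((1 - t) • u + t • v) := by
      apply (A.val_continuous i).comp
      exact ((continuous_const.sub continuous_id).smul continuous_const).add
        (continuous_id.smul continuous_const)
    have ivt := intermediate_value_Icc (zero_le_one (α := ℝ)) hc.continuousOn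
    have h0 : (0 : ℝ) ∈ Icc (A.val i ((1 - (0:ℝ)) • u + (0:ℝ) • v))
        (A.val i ((1 - (1:ℝ)) • u + (1:ℝ) • v)) := by
      simp only [sub_zero, one_smul, zero_smul, add_zero, sub_self, zero_add]
      exact ⟨le_of_lt h1, le_of_lt h2⟩
    obtain ⟨t, ht, ht0⟩ := ivt h0
    have hmem : (1 - t) • u + t • v ∈ s := hs hu hv (by linarith [ht.1, ht.2]) ht.1 (by ring)
    exact h _ hmem ht0
  rcases lt_trichotomy (A.val i x) 0 with h1 | h1 | h1
  · rcases lt_trichotomy (A.val i y) 0 with h2 | h2 | h2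
    · rw [sign_neg h1, sign_neg h2]
    · exact absurd h2 (h y hy)
    · exact absurd (key x y hx hy h1 h2) (by simp)
  · exact absurd h1 (h x hx)
  · rcases lt_trichotomy (A.val i y) 0 with h2 | h2 | h2
    · exact absurd (key y x hy hx h2 h1) (by simp)
    · exact absurd h2 (h y hy)
    · rw [sign_pos h1, sign_pos h2]

lemma openCell_isOpen (σ : ι → SignType) (hσ : ∀ i, σ i ≠ 0) :
    IsOpen (A.openCell σ) := by
  rw [Metric.isOpen_iff]
  intro x hx
  obtain ⟨ε, hε, hfin⟩ := A.locFin x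
  set S := {i : ι | ∃ y ∈ Metric.ball x ε, (inner ℝ (A.a i) y : ℝ) = A.b i} with hS
  have hUnhds : ∀ i, {y | SignType.sign (A.val i y) = σ i} ∈ nhds x := by
    intro i
    have hxi := hx i
    have hne : A.val i x ≠ 0 := fun h0 => hσ i (by rw [← hxi, h0, sign_zero])
    rcases hne.lt_or_gt with h1 | h1
    · refine Filter.mem_of_superset (IsOpen.mem_nhds
        (isOpen_lt (A.val_continuous i) continuous_const) (by exact h1)) ?_
      intro y (hy : A.val i y < 0)
      show SignType.sign (A.val i y) = σ i
      rw [← hxi, sign_neg h1, sign_neg hy]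
    · refine Filter.mem_of_superset (IsOpen.mem_nhds
        (isOpen_lt continuous_const (A.val_continuous i)) (by exact h1)) ?_
      intro y (hy : 0 < A.val i y)
      show SignType.sign (A.val i y) = σ i
      rw [← hxi, sign_pos h1, sign_pos hy]
  have hmem : Metric.ball x ε ∩ ⋂ i ∈ S, {y | SignType.sign (A.val i y) = σ i} ∈ nhds x := by
    refine Filter.inter_mem (Metric.ball_mem_nhds x hε) ?_
    exact (Filter.biInter_mem hfin).mpr fun i _ => hUnhds i
  obtain ⟨δ, hδ, hball⟩ := Metric.mem_nhds_iff.mp hmem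
  refine ⟨δ, hδ, fun y hy i => ?_⟩
  obtain ⟨hyε, hyU⟩ := hball hy
  by_cases hiS : i ∈ S
  · exact (Set.mem_iInter₂.mp hyU i hiS : _)
  · have hnz : ∀ z ∈ Metric.ball x ε, A.val i z ≠ 0 := by
      intro z hz h0
      exact hiS ⟨z, hz, by have := sub_eq_zero.mp h0; exact this⟩
    have := A.sign_const_of_ne_zero (convex_ball x ε) i hnz hyε
      (Metric.mem_ball_self hε)
    rw [this, hx i]

lemma interior_sign (σ : ι → SignType) (hσ : ∀ i, σ i ≠ 0)
    {z : EuclideanSpace ℝ (Fin n)} (hz : z ∈ interior (closure (A.openCell σ))) (i : ι) :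
    SignType.sign (A.val i z) = σ i := by
  have hz' : z ∈ closure (A.openCell σ) := interior_subset hz
  have hne : A.val i z ≠ 0 := by
    intro h0
    obtain ⟨δ, hδ, hball⟩ := Metric.isOpen_iff.mp isOpen_interior z hz
    have hat : (0:ℝ) < ‖A.a i‖ := norm_pos_iff.mpr (A.ha i)
    set t : ℝ := δ / (2 * ‖A.a i‖) with htdef
    have ht : 0 < t := div_pos hδ (by linarith)
    have hdist : ∀ s : ℝ, |s| = t → z + s • A.a i ∈ Metric.ball z δ := by
      intro s hs
      rw [Metric.mem_ball, dist_eq_norm]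
      have : z + s • A.a i - z = s • A.a i := by abel
      rw [this, norm_smul, Real.norm_eq_abs, hs]
      rw [htdef]
      rw [div_mul_eq_mul_div]
      rw [div_lt_iff₀ (by linarith)]
      nlinarith
    have hvplus : ∀ s : ℝ, A.val i (z + s • A.a i) = A.val i z + s * ‖A.a i‖ ^ 2 := by
      intro s
      simp only [val, inner_add_right, real_inner_smul_right, real_inner_self_eq_norm_sq]
      ring
    have c1 := A.closure_sign σ i _ (interior_subset (hball (hdist t (abs_of_pos ht))))
    have c2 := A.closure_sign σ i _ (interior_subset (hball (hdist (-t) (by rw [abs_neg, abs_of_pos ht]))))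
    rw [hvplus, h0, zero_add] at c1 c2
    rcases h' : σ i with _ | _ | _
    · exact hσ i h'
    · rw [h', show ((SignType.neg : SignType) : ℝ) = -1 from rfl] at c1; nlinarith [mul_pos ht (pow_pos hat 2)]
    · rw [h', show ((SignType.pos : SignType) : ℝ) = 1 from rfl] at c2; nlinarith [mul_pos ht (pow_pos hat 2)]
  exact A.sign_eq_of_mem_closure hz' i hne (hσ i)

lemma signAt_ne_zero {x : EuclideanSpace ℝ (Fin n)} (hx : ∀ i, A.val i x ≠ 0) (i : ι) :
    A.signAt x i ≠ 0 := sign_ne_zero.mpr (hx i)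

lemma mem_interior_chamber {x : EuclideanSpace ℝ (Fin n)} (hx : ∀ i, A.val i x ≠ 0) :
    x ∈ interior (closure (A.openCell (A.signAt x))) :=
  interior_maximal subset_closure (A.openCell_isOpen _ (A.signAt_ne_zero hx))
    (A.mem_openCell_self x)

lemma sep_iff {x x' : EuclideanSpace ℝ (Fin n)}
    (hx : ∀ i, A.val i x ≠ 0) (hx' : ∀ i, A.val i x' ≠ 0) (i : ι) :
    i ∈ A.sep (closure (A.openCell (A.signAt x))) (closure (A.openCell (A.signAt x'))) ↔
      SignType.sign (A.val i x) ≠ SignType.sign (A.val i x') := by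
  constructor
  · intro h hcontra
    have hlt := h x (A.mem_interior_chamber hx) x' (A.mem_interior_chamber hx')
    rcases (hx i).lt_or_gt with h1 | h1 <;> rcases (hx' i).lt_or_gt with h2 | h2
    · nlinarith
    · rw [sign_neg h1, sign_pos h2] at hcontra; exact absurd hcontra (by simp)
    · rw [sign_pos h1, sign_neg h2] at hcontra; exact absurd hcontra (by simp)
    · nlinarith
  · intro h z hz z' hz'
    have s1 := A.interior_sign _ (A.signAt_ne_zero hx) hz i
    have s2 := A.interior_sign _ (A.signAt_ne_zero hx') hz' i
    rw [show A.signAt x i = SignType.sign (A.val i x) from rfl] at s1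
    rw [show A.signAt x' i = SignType.sign (A.val i x') from rfl] at s2
    rcases (hx i).lt_or_gt with h1 | h1 <;> rcases (hx' i).lt_or_gt with h2 | h2
    · exact absurd (by rw [sign_neg h1, sign_neg h2]) h
    · rw [sign_neg h1] at s1; rw [sign_pos h2] at s2
      have ha := sign_eq_neg_one_iff.mp s1
      have hb := sign_eq_one_iff.mp s2
      nlinarith
    · rw [sign_pos h1] at s1; rw [sign_neg h2] at s2
      have ha := sign_eq_one_iff.mp s1
      have hb := sign_eq_neg_one_iff.mp s2
      nlinarith
    · exact absurd (by rw [sign_pos h1, sign_pos h2]) h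

lemma supp_iff (w : EuclideanSpace ℝ (Fin n)) (i : ι) :
    i ∈ A.supp (closure (A.openCell (A.signAt w))) ↔ A.val i w = 0 := by
  constructor
  · intro h
    exact h (subset_closure (A.mem_openCell_self w))
  · intro h y hy
    have h0 : A.signAt w i = 0 := sign_eq_zero_iff.mpr h
    exact A.zero_on_closure (A.signAt w) i h0 y hy

end Arrangement

/-- Let `C, D, D'` be chambers and `F' ⪯ F` faces (i.e. `F ⊆ F'`), with `F'` a face of
both `D` and `D'`, `F` a face of `D`, `D = C.F` and `D' = C.F'`. Then for the opposite
chambers `E = D^F` and `E' = D'^{F'}` one has `s(C,E') ⊆ s(C,E)`, i.e. `E' ≤_C E`. -/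
theorem stmt19 {n : ℕ} {ι : Type} (A : Arrangement n ι)
    (C D D' F F' E E' : Set (EuclideanSpace ℝ (Fin n)))
    (hC : A.IsChamber C) (hD : A.IsChamber D) (hD' : A.IsChamber D')
    (hF : A.IsFace F) (hF' : A.IsFace F') (hFF' : F ⊆ F')
    (hFD : F ⊆ D) (hF'D : F' ⊆ D) (hF'D' : F' ⊆ D')
    (hCF : A.IsCF C F D) (hCF' : A.IsCF C F' D')
    (hE : A.IsOpp D F E) (hE' : A.IsOpp D' F' E') :
    A.sep C E' ⊆ A.sep C E := by
  obtain ⟨w, hFeq⟩ := hF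
  obtain ⟨w', hF'eq⟩ := hF'
  obtain ⟨xc, hxc, hCeq⟩ := hC
  obtain ⟨xd, hxd, hDeq⟩ := hD
  obtain ⟨xd', hxd', hD'eq⟩ := hD'
  obtain ⟨xe, hxe, hEeq⟩ := hE.1
  obtain ⟨xe', hxe', hE'eq⟩ := hE'.1
  subst hFeq hF'eq hCeq hDeq hD'eq hEeq hE'eq
  intro i hi
  rw [A.sep_iff hxc hxe' i] at hi
  rw [A.sep_iff hxc hxe i]
  have h4 : ∀ j, (SignType.sign (A.val j xd) ≠ SignType.sign (A.val j xe)) ↔ A.val j w = 0 := by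
    intro j
    rw [← A.sep_iff hxd hxe j, ← A.supp_iff w j, hE.2.2]
  have h5 : ∀ j, (SignType.sign (A.val j xd') ≠ SignType.sign (A.val j xe')) ↔
      A.val j w' = 0 := by
    intro j
    rw [← A.sep_iff hxd' hxe' j, ← A.supp_iff w' j, hE'.2.2]
  by_cases hw : A.val i w = 0
  · have hde : SignType.sign (A.val i xd) ≠ SignType.sign (A.val i xe) := (h4 i).mpr hw
    have hcd : SignType.sign (A.val i xc) = SignType.sign (A.val i xd) := by
      by_contra hne
      have hmem : i ∈ A.sep (closure (A.openCell (A.signAt xc)))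
          (closure (A.openCell (A.signAt xd))) ∩
          A.supp (closure (A.openCell (A.signAt w))) :=
        ⟨(A.sep_iff hxc hxd i).mpr hne, (A.supp_iff w i).mpr hw⟩
      rw [hCF.2.2] at hmem
      exact hmem
    rw [hcd]
    exact hde
  · have hw' : A.val i w' ≠ 0 := by
      intro h0
      have h0' : A.signAt w' i = 0 := sign_eq_zero_iff.mpr h0
      exact hw (A.zero_on_closure (A.signAt w') i h0' w
        (hFF' (subset_closure (A.mem_openCell_self w))))
    have hde : SignType.sign (A.val i xd) = SignType.sign (A.val i xe) :=
      not_ne_iff.mp fun hne => hw ((h4 i).mp hne)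
    have hd'e' : SignType.sign (A.val i xd') = SignType.sign (A.val i xe') :=
      not_ne_iff.mp fun hne => hw' ((h5 i).mp hne)
    have hw'd : SignType.sign (A.val i w') = SignType.sign (A.val i xd) :=
      A.sign_eq_of_mem_closure
        (hF'D (subset_closure (A.mem_openCell_self w'))) i hw' (A.signAt_ne_zero hxd i)
    have hw'd' : SignType.sign (A.val i w') = SignType.sign (A.val i xd') :=
      A.sign_eq_of_mem_closure
        (hF'D' (subset_closure (A.mem_openCell_self w'))) i hw' (A.signAt_ne_zero hxd' i)
    rw [← hde, ← hw'd, hw'd', hd'e']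
    exact hi
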